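/- Let a, b ∈ ℝ with a ≠ 0. The initial datum of Ozawa's blow-up solution of the focusing Davey–Stewartson II equation, U(X, Y) = e^{−ib(4a)^{−1}(X² − Y²)} / ( a(1 + ((X/a)² + (Y/a)²)/2) ), satisfies ∫_{ℝ²} |U(X, Y)|² dX dY = 2π. -/

import Mathlib

open MeasureTheory Set Real

/-- the initial datum of Ozawa's blow-up solution of the focusing
Davey–Stewartson II equation,
`U(X, Y) = e^{−ib(4a)^{−1}(X² − Y²)} / (a(1 + ((X/a)² + (Y/a)²)/2))` (with `a ≠ 0`),
satisfies `∫_{ℝ²} |U|² dX dY = 2π`. -/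
theorem stmt16 (a b : ℝ) (ha : a ≠ 0) (U : ℝ → ℝ → ℂ)
    (hU : U = fun (X Y : ℝ) =>
      Complex.exp (-Complex.I * (b : ℂ) * (4 * (a : ℂ))⁻¹ * ((X : ℂ) ^ 2 - (Y : ℂ) ^ 2)) /
        ((a : ℂ) * (1 + (((X : ℂ) / (a : ℂ)) ^ 2 + ((Y : ℂ) / (a : ℂ)) ^ 2) / 2))) :
    ∫ p : ℝ × ℝ, ‖U p.1 p.2‖ ^ 2 = 2 * Real.pi := by
  have ha2 : (0:ℝ) < a ^ 2 := by positivity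
  -- pointwise formula for |U|²
  have key : ∀ x y : ℝ, ‖U x y‖ ^ 2
      = (a ^ 2 * (1 + (x ^ 2 + y ^ 2) / (2 * a ^ 2)) ^ 2)⁻¹ := by
    intro x y
    have hd : (0:ℝ) < 1 + (x ^ 2 + y ^ 2) / (2 * a ^ 2) := by positivity
    rw [hU]
    simp only
    rw [norm_div, Complex.norm_exp]
    have hz : -Complex.I * (b : ℂ) * (4 * (a : ℂ))⁻¹ * ((x : ℂ) ^ 2 - (y : ℂ) ^ 2)
        = ((b * (4 * a)⁻¹ * (x ^ 2 - y ^ 2) : ℝ) : ℂ) * (-Complex.I) := by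
      push_cast; ring
    rw [hz]
    have hre : ∀ r : ℝ, ((r : ℂ) * (-Complex.I)).re = 0 := fun r => by simp
    rw [hre, Real.exp_zero]
    have hden : ((a : ℂ) * (1 + (((x : ℂ) / (a : ℂ)) ^ 2 + ((y : ℂ) / (a : ℂ)) ^ 2) / 2))
        = ((a * (1 + ((x / a) ^ 2 + (y / a) ^ 2) / 2) : ℝ) : ℂ) := by
      push_cast; ring
    rw [hden, Complex.norm_real, Real.norm_eq_abs]
    rw [div_pow, one_pow, sq_abs]
    field_simp
  have hint : ∫ p : ℝ × ℝ, ‖U p.1 p.2‖ ^ 2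
      = ∫ p : ℝ × ℝ, (a ^ 2 * (1 + (p.1 ^ 2 + p.2 ^ 2) / (2 * a ^ 2)) ^ 2)⁻¹ := by
    congr 1; funext p; exact key p.1 p.2
  rw [hint, ← integral_comp_polarCoord_symm
    (fun p : ℝ × ℝ => (a ^ 2 * (1 + (p.1 ^ 2 + p.2 ^ 2) / (2 * a ^ 2)) ^ 2)⁻¹)]
  rw [polarCoord_target]
  have hsimp : ∀ p : ℝ × ℝ,
      p.1 • (a ^ 2 * (1 + ((polarCoord.symm p).1 ^ 2 + (polarCoord.symm p).2 ^ 2)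
        / (2 * a ^ 2)) ^ 2)⁻¹
      = (p.1 * (a ^ 2 * (1 + p.1 ^ 2 / (2 * a ^ 2)) ^ 2)⁻¹) * (fun _ : ℝ => (1:ℝ)) p.2 := by
    intro p
    have : (polarCoord.symm p).1 ^ 2 + (polarCoord.symm p).2 ^ 2 = p.1 ^ 2 := by
      simp only [polarCoord_symm_apply]
      have := Real.cos_sq_add_sin_sq p.2
      nlinarith [Real.cos_sq_add_sin_sq p.2]
    rw [this, smul_eq_mul, mul_one]
  rw [setIntegral_congr_fun (measurableSet_Ioi.prod measurableSet_Ioo) (fun p _ => hsimp p),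
    Measure.volume_eq_prod]
  have hθ : ∫ _ in Ioo (-π) π, (1:ℝ) = 2 * π := by
    simp only [integral_const, Measure.restrict_apply MeasurableSet.univ, Set.univ_inter,
      volume_Ioo, sub_neg_eq_add, smul_eq_mul, mul_one]
    simp only [Measure.real, Measure.restrict_apply MeasurableSet.univ, Set.univ_inter, volume_Ioo, sub_neg_eq_add]
    rw [ENNReal.toReal_ofReal (by positivity : (0:ℝ) ≤ π + π)]
    ring
  have hr : ∫ r in Ioi (0:ℝ), r * (a ^ 2 * (1 + r ^ 2 / (2 * a ^ 2)) ^ 2)⁻¹ = 1 := by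
    have := integral_Ioi_of_hasDerivAt_of_nonneg
      (g := fun r : ℝ => -(1 + r ^ 2 / (2 * a ^ 2))⁻¹)
      (g' := fun r : ℝ => r * (a ^ 2 * (1 + r ^ 2 / (2 * a ^ 2)) ^ 2)⁻¹)
      (a := 0) (l := 0) ?_ ?_ ?_ ?_
    · rw [this]; norm_num
    · exact (Continuous.continuousWithinAt (by fun_prop (disch := intro x; positivity)))
    · intro x _
      have hdx : (0:ℝ) < 1 + x ^ 2 / (2 * a ^ 2) := by positivity
      have : HasDerivAt (fun r : ℝ => 1 + r ^ 2 / (2 * a ^ 2)) (x / a ^ 2) x := by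
        have := ((hasDerivAt_pow 2 x).div_const (2 * a ^ 2)).const_add 1
        refine this.congr_deriv ?_
        norm_num
        field_simp
      have := (this.inv hdx.ne').neg
      refine this.congr_deriv ?_
      field_simp
    · intro x hx
      have : (0:ℝ) < x := hx
      positivity
    · have h1 : Filter.Tendsto (fun r : ℝ => 1 + r ^ 2 / (2 * a ^ 2)) Filter.atTop Filter.atTop := by
        apply Filter.tendsto_atTop_add_const_left
        exact (Filter.tendsto_pow_atTop (by norm_num)).atTop_div_const (by positivity)
      have := (h1.inv_tendsto_atTop).neg
      simpa using this
  trans ((∫ r in Ioi (0:ℝ), r * (a ^ 2 * (1 + r ^ 2 / (2 * a ^ 2)) ^ 2)⁻¹) *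
      ∫ _ in Ioo (-π) π, (1:ℝ))
  · exact setIntegral_prod_mul (fun r : ℝ => r * (a ^ 2 * (1 + r ^ 2 / (2 * a ^ 2)) ^ 2)⁻¹)
      (fun _ : ℝ => (1:ℝ)) _ _
  · rw [hr, hθ, one_mul]
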